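/- arXiv:2208.06666 — 2 statements merged into one kernel-verified Lean document; each statement's English description precedes it below -/
import Mathlib

section
/- Fix a > 0, P_e ≠ 0, D_a = 0, and N ∈ ℕ. For every polynomial q of degree ≤ N there exists a unique polynomial p in the span of {(x/a)^j : 1 ≤ j ≤ N+1} (i.e., with zero constant term and degree ≤ N+1) such that P_e p' − p'' = q. -/
open Polynomial

private lemma cd_deriv_CX (b : ℝ) (m : ℕ) :
    derivative (C b * X ^ (m + 1) : Polynomial ℝ) = C (b * ((m : ℝ) + 1)) * X ^ m := by
  rw [derivative_C_mul, derivative_X_pow]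
  push_cast
  simp [C_mul, mul_assoc]

private lemma cd_deriv_eq_zero (Pe : ℝ) (hPe : Pe ≠ 0) (d : Polynomial ℝ)
    (h : C Pe * derivative d - derivative (derivative d) = 0) : derivative d = 0 := by
  by_contra hd
  set g := derivative d with hg
  have heq : C Pe * g = derivative g := by linear_combination h
  have hzero : (derivative g).coeff g.natDegree = 0 := by
    rcases eq_or_ne g.natDegree 0 with h0 | h0
    · have hgc : g = C (g.coeff 0) := eq_C_of_natDegree_eq_zero h0
      rw [hgc]; simp
    · exact coeff_eq_zero_of_natDegree_lt (natDegree_derivative_lt h0)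
  have hlead : (C Pe * g).coeff g.natDegree = Pe * g.leadingCoeff := by
    simp only [coeff_C_mul, Polynomial.leadingCoeff]
  have : Pe * g.leadingCoeff = 0 := by rw [← hlead, heq, hzero]
  rcases mul_eq_zero.mp this with h' | h'
  · exact hPe h'
  · exact hd (leadingCoeff_eq_zero.mp h')

private lemma cd_exists_sol (Pe : ℝ) (hPe : Pe ≠ 0) :
    ∀ n : ℕ, ∀ q : Polynomial ℝ, q.natDegree ≤ n →
      ∃ p : Polynomial ℝ, p.coeff 0 = 0 ∧ p.natDegree ≤ n + 1 ∧
        C Pe * derivative p - derivative (derivative p) = q := by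
  intro n
  induction n with
  | zero =>
    intro q hq
    refine ⟨C (q.coeff 0 / Pe) * X, by simp, ?_, ?_⟩
    · exact (natDegree_C_mul_le _ _).trans (by simp)
    · have hqc : q = C (q.coeff 0) := eq_C_of_natDegree_le_zero hq
      rw [hqc]
      simp [derivative_C_mul, ← C_mul, mul_div_cancel₀ _ hPe]
  | succ n ih =>
    intro q hq
    set c := q.coeff (n + 1) with hc
    set k := c / (Pe * ((n : ℝ) + 2)) with hk
    have hn2 : ((n : ℝ) + 2) ≠ 0 := by positivity
    have hPen : Pe * ((n : ℝ) + 2) ≠ 0 := mul_ne_zero hPe hn2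
    have hd1 : derivative (C k * X ^ (n + 2)) = C (k * ((n : ℝ) + 2)) * X ^ (n + 1) := by
      have := cd_deriv_CX k (n + 1)
      push_cast at this ⊢
      convert this using 3 <;> ring
    have hd2 : derivative (C (k * ((n : ℝ) + 2)) * X ^ (n + 1))
        = C (k * ((n : ℝ) + 2) * ((n : ℝ) + 1)) * X ^ n := by
      have := cd_deriv_CX (k * ((n : ℝ) + 2)) n
      push_cast at this ⊢
      exact this
    have hck : Pe * (k * ((n : ℝ) + 2)) = c := by
      rw [hk]; field_simp
    have hL1 : C Pe * derivative (C k * X ^ (n + 2))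
        - derivative (derivative (C k * X ^ (n + 2)))
        = C c * X ^ (n + 1) - C (k * ((n : ℝ) + 2) * ((n : ℝ) + 1)) * X ^ n := by
      rw [hd1, hd2, ← mul_assoc, ← C_mul, hck]
    set r := q - (C c * X ^ (n + 1) - C (k * ((n : ℝ) + 2) * ((n : ℝ) + 1)) * X ^ n)
      with hr
    have hrdeg : r.natDegree ≤ n := by
      rw [natDegree_le_iff_coeff_eq_zero]
      intro m hm
      have hm1 : n + 1 ≤ m := hm
      rcases eq_or_lt_of_le hm1 with hme | hml
      · rw [hr]
        simp only [coeff_sub, coeff_C_mul, coeff_X_pow]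
        rw [← hme]
        simp [hc, Nat.ne_of_gt hm]
      · rw [hr]
        have hq0 : q.coeff m = 0 :=
          coeff_eq_zero_of_natDegree_lt (lt_of_le_of_lt hq hml)
        simp only [coeff_sub, coeff_C_mul, coeff_X_pow, hq0]
        have h1 : n + 1 ≠ m := Nat.ne_of_lt hml
        have h2 : n ≠ m := by omega
        have h1' : m ≠ n + 1 := by omega
        have h2' : m ≠ n := by omega
        simp [h1, h2, h1', h2']
    obtain ⟨p₂, hp0, hpdeg, hpL⟩ := ih r hrdeg
    refine ⟨C k * X ^ (n + 2) + p₂, ?_, ?_, ?_⟩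
    · simp [coeff_X_pow, hp0]
    · refine (natDegree_add_le _ _).trans (max_le ?_ ?_)
      · exact (natDegree_C_mul_le _ _).trans (by simp)
      · omega
    · rw [derivative_add, derivative_add]
      linear_combination hL1 + hpL + hr

open Polynomial in
theorem convection_diffusion_polynomial_solution (a Pe : ℝ) (ha : a > 0)
    (hPe : Pe ≠ 0) (N : ℕ) :
    ∀ q : ℝ[X], q.natDegree ≤ N →
      ∃! p : ℝ[X], p.coeff 0 = 0 ∧ p.natDegree ≤ N + 1 ∧
        C Pe * derivative p - derivative (derivative p) = q := by
  intro q hq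
  obtain ⟨p, h0, hdeg, hL⟩ := cd_exists_sol Pe hPe N q hq
  refine ⟨p, ⟨h0, hdeg, hL⟩, ?_⟩
  rintro p' ⟨h0', hdeg', hL'⟩
  have hdz : derivative (p' - p) = 0 := by
    apply cd_deriv_eq_zero Pe hPe
    rw [derivative_sub, derivative_sub]
    linear_combination hL' - hL
  have hcon : p' - p = C ((p' - p).coeff 0) :=
    eq_C_of_natDegree_eq_zero (natDegree_eq_zero_of_derivative_eq_zero hdz)
  rw [coeff_sub, h0', h0, sub_zero, C_0] at hcon
  linear_combination hcon
end

section
/- For β_n > 0, P_e1, P_e2, P_e, D_a ∈ ℝ such that γ₁ = −P_e1² − 4β_n² + 4P_e D_a and γ₂ = −4P_e2 β_n are not both zero, write the characteristic roots as η₁ = (−α₁ + α₃) − iα₂ and η₂ = (−α₁ − α₃) + iα₂. Then the real functions u₁(x₁,x₂) = exp((−α₁+α₃)x₁)·cos(β_n x₂ − α₂ x₁) and u₂(x₁,x₂) = exp((−α₁+α₃)x₁)·sin(β_n x₂ − α₂ x₁) satisfy the homogeneous two-dimensional convection-diffusion-reaction equation P_e1 u_{x₁} + P_e2 u_{x₂}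 − Δu − P_e D_a u = 0. -/
lemma keyA (a b c p q : ℝ) (t : ℝ) :
    HasDerivAt (fun t => Real.exp (a*t) * (p*Real.cos (c - b*t) + q*Real.sin (c - b*t)))
      (Real.exp (a*t) * ((a*p - b*q)*Real.cos (c - b*t) + (a*q + b*p)*Real.sin (c - b*t))) t := by
  have h1 : HasDerivAt (fun t : ℝ => a*t) a t := by simpa using (hasDerivAt_id t).const_mul a
  have h2 : HasDerivAt (fun t : ℝ => c - b*t) (-b) t := by
    simpa using ((hasDerivAt_id t).const_mul b).const_sub c
  have := h1.exp.mul (((h2.cos).const_mul p).add ((h2.sin).const_mul q))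
  exact this.congr_deriv (by simp only [Pi.add_apply]; ring)

lemma keyB (b d p q : ℝ) (t : ℝ) :
    HasDerivAt (fun t => p*Real.cos (b*t - d) + q*Real.sin (b*t - d))
      ((b*q)*Real.cos (b*t - d) + (-(b*p))*Real.sin (b*t - d)) t := by
  have h2 : HasDerivAt (fun t : ℝ => b*t - d) b t := by
    simpa using ((hasDerivAt_id t).const_mul b).sub_const d
  have := ((h2.cos).const_mul p).add ((h2.sin).const_mul q)
  exact this.congr_deriv (by ring)

theorem real_homogeneous_solutions_2d (Pe1 Pe2 Pe Da βn α₁ α₂ α₃ : ℝ)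
    (hβ : βn > 0)
    (hγ : ¬(-Pe1 ^ 2 - 4 * βn ^ 2 + 4 * Pe * Da = 0 ∧ -4 * Pe2 * βn = 0))
    (hα₁ : α₁ = -Pe1 / 2)
    (hroot : (((-α₁ + α₃ : ℝ) : ℂ) - α₂ * Complex.I) ^ 2
      - (Pe1 : ℂ) * (((-α₁ + α₃ : ℝ) : ℂ) - α₂ * Complex.I)
      + (-(βn : ℂ) ^ 2 + (Pe : ℂ) * Da - Complex.I * Pe2 * βn) = 0) :
    let u₁ : ℝ → ℝ → ℝ := fun x₁ x₂ =>
      Real.exp ((-α₁ + α₃) * x₁) * Real.cos (βn * x₂ - α₂ * x₁)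
    let u₂ : ℝ → ℝ → ℝ := fun x₁ x₂ =>
      Real.exp ((-α₁ + α₃) * x₁) * Real.sin (βn * x₂ - α₂ * x₁)
    (∀ x₁ x₂ : ℝ,
      Pe1 * deriv (fun t => u₁ t x₂) x₁ + Pe2 * deriv (fun t => u₁ x₁ t) x₂ -
      (deriv (deriv (fun t => u₁ t x₂)) x₁ + deriv (deriv (fun t => u₁ x₁ t)) x₂) -
      Pe * Da * u₁ x₁ x₂ = 0) ∧
    (∀ x₁ x₂ : ℝ,
      Pe1 * deriv (fun t => u₂ t x₂) x₁ + Pe2 * deriv (fun t => u₂ x₁ t) x₂ -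
      (deriv (deriv (fun t => u₂ t x₂)) x₁ + deriv (deriv (fun t => u₂ x₁ t)) x₂) -
      Pe * Da * u₂ x₁ x₂ = 0) := by
  rw [Complex.ext_iff] at hroot
  obtain ⟨h1, h2⟩ := hroot
  simp [Complex.add_re, Complex.sub_re, Complex.mul_re, Complex.mul_im, pow_two,
    Complex.add_im, Complex.sub_im, Complex.I_re, Complex.I_im] at h1 h2
  have hre : (-α₁+α₃)^2 - α₂^2 - Pe1*(-α₁+α₃) - βn^2 + Pe*Da = 0 := by nlinarith [h1, h2]
  have him : -2*(-α₁+α₃)*α₂ + Pe1*α₂ - Pe2*βn = 0 := by nlinarith [h1, h2]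
  intro u₁ u₂
  constructor <;> intro x₁ x₂
  · -- u₁
    have e1 : (fun t => u₁ t x₂) = fun t => Real.exp ((-α₁+α₃)*t) *
        (1*Real.cos (βn*x₂ - α₂*t) + 0*Real.sin (βn*x₂ - α₂*t)) := funext fun t => by
      simp only [u₁]; ring_nf
    have d1 : deriv (fun t => u₁ t x₂) = fun t => Real.exp ((-α₁+α₃)*t) *
        (((-α₁+α₃)*1 - α₂*0)*Real.cos (βn*x₂ - α₂*t) + ((-α₁+α₃)*0 + α₂*1)*Real.sin (βn*x₂ - α₂*t)) :=
      funext fun t => by rw [e1]; exact (keyA (-α₁+α₃) α₂ (βn*x₂) 1 0 t).deriv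
    have d2 := (keyA (-α₁+α₃) α₂ (βn*x₂) ((-α₁+α₃)*1 - α₂*0) ((-α₁+α₃)*0 + α₂*1) x₁).deriv
    have e2 : (fun t => u₁ x₁ t) = fun t => (Real.exp ((-α₁+α₃)*x₁))*Real.cos (βn*t - α₂*x₁) +
        0*Real.sin (βn*t - α₂*x₁) := funext fun t => by simp only [u₁]; ring_nf
    have d3 : deriv (fun t => u₁ x₁ t) = fun t =>
        (βn*0)*Real.cos (βn*t - α₂*x₁) + (-(βn*(Real.exp ((-α₁+α₃)*x₁))))*Real.sin (βn*t - α₂*x₁) :=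
      funext fun t => by rw [e2]; exact (keyB βn (α₂*x₁) (Real.exp ((-α₁+α₃)*x₁)) 0 t).deriv
    have d4 := (keyB βn (α₂*x₁) (βn*0) (-(βn*(Real.exp ((-α₁+α₃)*x₁)))) x₂).deriv
    rw [d1, d3]
    beta_reduce
    rw [d2, d4]
    simp only [u₁]
    linear_combination (-(Real.exp ((-α₁+α₃)*x₁) * Real.cos (βn*x₂ - α₂*x₁)))*hre +
      (Real.exp ((-α₁+α₃)*x₁) * Real.sin (βn*x₂ - α₂*x₁))*him
  · -- u₂
    have e1 : (fun t => u₂ t x₂) = fun t => Real.exp ((-α₁+α₃)*t) *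
        (0*Real.cos (βn*x₂ - α₂*t) + 1*Real.sin (βn*x₂ - α₂*t)) := funext fun t => by
      simp only [u₂]; ring_nf
    have d1 : deriv (fun t => u₂ t x₂) = fun t => Real.exp ((-α₁+α₃)*t) *
        (((-α₁+α₃)*0 - α₂*1)*Real.cos (βn*x₂ - α₂*t) + ((-α₁+α₃)*1 + α₂*0)*Real.sin (βn*x₂ - α₂*t)) :=
      funext fun t => by rw [e1]; exact (keyA (-α₁+α₃) α₂ (βn*x₂) 0 1 t).deriv
    have d2 := (keyA (-α₁+α₃) α₂ (βn*x₂) ((-α₁+α₃)*0 - α₂*1) ((-α₁+α₃)*1 + α₂*0) x₁).deriv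
    have e2 : (fun t => u₂ x₁ t) = fun t => 0*Real.cos (βn*t - α₂*x₁) +
        (Real.exp ((-α₁+α₃)*x₁))*Real.sin (βn*t - α₂*x₁) := funext fun t => by simp only [u₂]; ring_nf
    have d3 : deriv (fun t => u₂ x₁ t) = fun t =>
        (βn*(Real.exp ((-α₁+α₃)*x₁)))*Real.cos (βn*t - α₂*x₁) + (-(βn*0))*Real.sin (βn*t - α₂*x₁) :=
      funext fun t => by rw [e2]; exact (keyB βn (α₂*x₁) 0 (Real.exp ((-α₁+α₃)*x₁)) t).deriv
    have d4 := (keyB βn (α₂*x₁) (βn*(Real.exp ((-α₁+α₃)*x₁))) (-(βn*0)) x₂).deriv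
    rw [d1, d3]
    beta_reduce
    rw [d2, d4]
    simp only [u₂]
    linear_combination (-(Real.exp ((-α₁+α₃)*x₁) * Real.sin (βn*x₂ - α₂*x₁)))*hre +
      (-(Real.exp ((-α₁+α₃)*x₁) * Real.cos (βn*x₂ - α₂*x₁)))*him
end
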